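/- In a Grothendieck topos of sheaves Sh(C, τ) on a site, for any natural transformation α : a y(x) ⇒ a y(x') between sheafified representables, there exists a τ-covering family (f_i : u_i → x)_i in C and morphisms g_i : u_i → x' in C such that α ∘ a y(f_i) = a y(g_i) for each i. -/

import Mathlib

open CategoryTheory Opposite

/-- In a Grothendieck topos `Sh(C, τ)`, any map `α : a y(x) ⟶ a y(x')` between
sheafified representables is locally induced by morphisms of the site: there is a
`τ`-covering family `(f i : u i ⟶ x)` and morphisms `g i : u i ⟶ x'` in `C` with
`a y(f i) ≫ α = a y(g i)` for each `i`. -/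
theorem map_of_sheafified_representables_locally_induced
    (C : Type) [SmallCategory C] (J : GrothendieckTopology C)
    (x x' : C)
    (α : (yoneda ⋙ presheafToSheaf J (Type)).obj x ⟶ (yoneda ⋙ presheafToSheaf J (Type)).obj x') :
    ∃ (ι : Type) (u : ι → C) (f : ∀ i, u i ⟶ x) (g : ∀ i, u i ⟶ x'),
      Sieve.generate (Presieve.ofArrows u f) ∈ J x ∧
      ∀ i, (yoneda ⋙ presheafToSheaf J (Type)).map (f i) ≫ α =
        (yoneda ⋙ presheafToSheaf J (Type)).map (g i) := by
  classical
  -- the composite `y(x) ⟶ sheafify (y x')` as a presheaf map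
  set β : yoneda.obj x ⟶ sheafify J (yoneda.obj x') :=
    toSheafify J (yoneda.obj x) ≫ α.hom with hβ
  -- the corresponding section
  set t : (sheafify J (yoneda.obj x')).obj (op x) := β.app (op x) (𝟙 x) with ht
  -- the image sieve of `t` covers `x` since `toSheafify` is locally surjective
  have hmem : Presheaf.imageSieve (toSheafify J (yoneda.obj x')) t ∈ J x :=
    Presheaf.imageSieve_mem J (toSheafify J (yoneda.obj x')) t
  set S := Presheaf.imageSieve (toSheafify J (yoneda.obj x')) t with hS
  refine ⟨Σ u : C, { f : u ⟶ x // S f }, fun i => i.1, fun i => i.2.1,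
    fun i => Presheaf.localPreimage (toSheafify J (yoneda.obj x')) t i.2.1 i.2.2, ?_, ?_⟩
  · refine J.superset_covering ?_ hmem
    rintro u φ hφ
    exact ⟨u, 𝟙 u, φ, Presieve.ofArrows.mk (⟨u, φ, hφ⟩ :
      Σ u : C, { f : u ⟶ x // S f }), by simp⟩
  · rintro ⟨u, φ, hφ⟩
    apply Sheaf.hom_ext
    apply sheafify_hom_ext J _ _ ((presheafToSheaf J Type).obj (yoneda.obj x')).cond
    dsimp only [Functor.comp_map]
    have h1 : toSheafify J (yoneda.obj u) ≫
        ((presheafToSheaf J Type).map (yoneda.map φ)).hom ≫ α.hom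
        = yoneda.map φ ≫ β := by
      rw [hβ, ← Category.assoc, ← toSheafify_naturality, Category.assoc]
    have h2 : toSheafify J (yoneda.obj u) ≫
        ((presheafToSheaf J Type).map (yoneda.map
          (Presheaf.localPreimage (toSheafify J (yoneda.obj x')) t φ hφ))).hom
        = yoneda.map (Presheaf.localPreimage (toSheafify J (yoneda.obj x')) t φ hφ) ≫
          toSheafify J (yoneda.obj x') := by
      rw [← toSheafify_naturality]
    simp only [ObjectProperty.FullSubcategory.comp_hom]
    rw [h1, h2]
    -- now an equality of maps `y(u) ⟶ sheafify (y x')`; check via Yoneda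
    apply yonedaEquiv.injective
    have hnat := NatTrans.naturality_apply β φ.op (𝟙 x)
    have hpre := Presheaf.app_localPreimage (toSheafify J (yoneda.obj x')) t φ hφ
    rw [yonedaEquiv_comp, yonedaEquiv_comp, yonedaEquiv_yoneda_map,
      yonedaEquiv_yoneda_map]
    refine Eq.trans ?_ hpre.symm
    simpa using hnat
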